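/- Let F ∈ F̃^k, let y ∈ K_F, and let G ∈ F̃^{k−1} ∩ R^F_y. Suppose the head of the unique arc of G coming from the set V(T^F_y) belongs to V(T^F_x) for a root x ∈ K_F. Then λ^•_{V(T^G_x)} = λ^•_{V(T^F_x)} + λ°_{V(T^F_y)}. -/

import Mathlib

open scoped Classical

namespace BarrierForests

variable {α : Type*} [Fintype α] [DecidableEq α]

/-- Total weight of a set of arcs. -/
def aweight (v : α → α → ℝ) (A : Finset (α × α)) : ℝ := ∑ a ∈ A, v a.1 a.2

/-- Weight `Υ^A_S` of the arcs of `A` whose tail lies in `S`. -/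
def aweightOn (v : α → α → ℝ) (A : Finset (α × α)) (S : Finset α) : ℝ :=
  ∑ a ∈ A.filter (fun a => a.1 ∈ S), v a.1 a.2

/-- The relation "there is an arc from `i` to `j` in `A`". -/
def arcRel (A : Finset (α × α)) : α → α → Prop := fun i j => (i, j) ∈ A

/-- Entering forest: every vertex has out-degree at most one, and there are no
directed cycles. -/
def IsEForest (A : Finset (α × α)) : Prop :=
  (∀ i j j', (i, j) ∈ A → (i, j') ∈ A → j = j') ∧
  ∀ i, ¬ Relation.TransGen (arcRel A) i i

/-- Roots of a (spanning) entering forest: the vertices with no outgoing arc. -/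
noncomputable def rootSet (A : Finset (α × α)) : Finset α :=
  Finset.univ.filter fun i => ∀ j, (i, j) ∉ A

/-- `𝓕^k`: spanning entering forests of the digraph with arc set `E`
having exactly `k` trees (equivalently, `k` roots). -/
def FSet (E : Finset (α × α)) (k : ℕ) : Set (Finset (α × α)) :=
  {A | A ⊆ E ∧ IsEForest A ∧ (rootSet A).card = k}

/-- The infimum (in `EReal`, so `⊤` for the empty family) of the `w`-weights of the
members of `s`. -/
noncomputable def minW {β : Type*} (s : Set β) (w : β → ℝ) : EReal :=
  sInf ((fun x => (w x : EReal)) '' s)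

/-- `φ^k`: minimum weight of a spanning entering forest with `k` trees. -/
noncomputable def phi (v : α → α → ℝ) (E : Finset (α × α)) (k : ℕ) : EReal :=
  minW (FSet E k) (aweight v)

/-- `F ∈ 𝓕̃^k`: minimal spanning entering forest with `k` trees. -/
def IsMinForest (v : α → α → ℝ) (E : Finset (α × α)) (k : ℕ) (F : Finset (α × α)) : Prop :=
  F ∈ FSet E k ∧ (aweight v F : EReal) = phi v E k

/-- Vertex set of the tree `T^F_i` of the entering forest `F` rooted at `i`:
all vertices from which `i` is reachable. -/
noncomputable def treeVerts (F : Finset (α × α)) (i : α) : Finset α :=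
  Finset.univ.filter fun j => Relation.ReflTransGen (arcRel F) j i

/-- Arc set of the tree `T^F_i`. -/
noncomputable def treeArcs (F : Finset (α × α)) (i : α) : Finset (α × α) :=
  F.filter fun a => a.1 ∈ treeVerts F i

/-- Induced subgraph (restriction) of the arc set `A` on the vertex set `S`. -/
def restrictArcs (A : Finset (α × α)) (S : Finset α) : Finset (α × α) :=
  A.filter fun a => a.1 ∈ S ∧ a.2 ∈ S

/-- `T ∈ 𝓣^{•q}_S`: `T` is an entering tree that is a subgraph of the digraph with
arc set `E`, with vertex set `S` and root `q`. -/
def IsTreeOn (E T : Finset (α × α)) (S : Finset α) (q : α) : Prop :=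
  q ∈ S ∧ T ⊆ E ∧ (∀ a ∈ T, a.1 ∈ S ∧ a.2 ∈ S) ∧
  (∀ i ∈ S, i ≠ q → ∃! j, (i, j) ∈ T) ∧
  (∀ j, (q, j) ∉ T) ∧
  ∀ i ∈ S, Relation.ReflTransGen (arcRel T) i q

/-- `λ^{•q}_S`. -/
noncomputable def lamB (v : α → α → ℝ) (E : Finset (α × α)) (S : Finset α) (q : α) : EReal :=
  minW {T | IsTreeOn E T S q} (aweight v)

/-- `λ^•_S = min_{q ∈ S} λ^{•q}_S`. -/
noncomputable def lamBul (v : α → α → ℝ) (E : Finset (α × α)) (S : Finset α) : EReal :=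
  minW {T | ∃ q ∈ S, IsTreeOn E T S q} (aweight v)

/-- `T ∈ 𝓣^{∘q}_S`: `T` has `|S| + 1` vertices, `T|_S` is an entering tree with vertex
set `S` and root `q`, and the single arc of `T` leaving `S` goes from `q` to the root
`r ∉ S` of `T`. -/
def IsCTreeOn (E T : Finset (α × α)) (S : Finset α) (q : α) : Prop :=
  ∃ r, r ∉ S ∧ ∃ T', IsTreeOn E T' S q ∧ (q, r) ∈ E ∧ T = insert (q, r) T'

/-- `λ^{∘q}_S`. -/
noncomputable def lamC (v : α → α → ℝ) (E : Finset (α × α)) (S : Finset α) (q : α) : EReal :=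
  minW {T | IsCTreeOn E T S q} (aweight v)

/-- `λ^∘_S = min_{q ∈ S} λ^{∘q}_S`. -/
noncomputable def lamCirc (v : α → α → ℝ) (E : Finset (α × α)) (S : Finset α) : EReal :=
  minW {T | ∃ q ∈ S, IsCTreeOn E T S q} (aweight v)

/-- `μ^∘_S`: minimum of `Υ^F_S` over the spanning entering forests `F ∈ 𝓕^∘_S`,
i.e. those in which every vertex of `S` has an outgoing arc. -/
noncomputable def muCirc (v : α → α → ℝ) (E : Finset (α × α)) (S : Finset α) : EReal :=
  minW {A | A ⊆ E ∧ IsEForest A ∧ ∀ i ∈ S, ∃ j, (i, j) ∈ A} fun A => aweightOn v A S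

/-- `G ∈ 𝓡^F_y`: `G` is a descendant of `F` at the root `y`, i.e. `y` is a root of
`F`, the roots of `G` are those of `F` except `y`, `G` induces `T^F_q` on the vertex
set of every tree of `F` other than `T^F_y`, and `G` induces a tree on the vertex set
of `T^F_y`. -/
def IsDescendant (E F G : Finset (α × α)) (y : α) : Prop :=
  y ∈ rootSet F ∧ rootSet G = rootSet F \ {y} ∧
  (∀ q ∈ rootSet G, restrictArcs G (treeVerts F q) = treeArcs F q) ∧
  ∃ a ∈ treeVerts F y, IsTreeOn E (restrictArcs G (treeVerts F y)) (treeVerts F y) a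

/-- A potential graph: a connected weighted undirected graph with a loop at every
vertex.  Edges are recorded as a symmetric reflexive set of ordered pairs, with a
symmetric weight function `p`. -/
structure PotGraph (α : Type*) [Fintype α] [DecidableEq α] where
  p : α → α → ℝ
  edges : Finset (α × α)
  symm_mem : ∀ i j, (i, j) ∈ edges → (j, i) ∈ edges
  loop_mem : ∀ i, (i, i) ∈ edges
  symm_w : ∀ i j, p i j = p j i
  connected : ∀ i j : α, Relation.ReflTransGen (fun a b => (a, b) ∈ edges ∧ a ≠ b) i j

/-- Arc set of the barrier digraph of the potential graph `P`: an arc `(i,j)`, `i ≠ j`,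
for each non-loop edge of `P`. -/
def barcs (P : PotGraph α) : Finset (α × α) := P.edges.filter fun a => a.1 ≠ a.2

/-- Arc weights of the barrier digraph: `v i j = p i j - p i i`. -/
def bw (P : PotGraph α) : α → α → ℝ := fun i j => P.p i j - P.p i i

/-- Weight of a set of undirected edges of `P`. -/
noncomputable def uweight (P : PotGraph α) (T : Finset (Sym2 α)) : ℝ :=
  ∑ e ∈ T, Sym2.lift ⟨P.p, P.symm_w⟩ e

/-- `T ∈ 𝓣_S`: `T` is an undirected tree that is a subgraph of `P` (loops unused)
with vertex set `S`: its edges are non-loop edges of `P` joining vertices of `S`,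
it is connected on `S`, and it has `|S| - 1` edges. -/
def IsUTreeOn (P : PotGraph α) (T : Finset (Sym2 α)) (S : Finset α) : Prop :=
  (∀ e ∈ T, ∃ i j, i ≠ j ∧ e = s(i, j) ∧ (i, j) ∈ P.edges ∧ i ∈ S ∧ j ∈ S) ∧
  (∀ i ∈ S, ∀ j ∈ S, Relation.ReflTransGen (fun a b => s(a, b) ∈ T) i j) ∧
  T.card + 1 = S.card

/-- `ν_S`: minimum weight of an undirected tree on `S` that is a subgraph of `P`. -/
noncomputable def nu (P : PotGraph α) (S : Finset α) : EReal :=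
  minW {T | IsUTreeOn P T S} (uweight P)

/-- The underlying undirected edge set of a set of arcs. -/
def undir (A : Finset (α × α)) : Finset (Sym2 α) := A.image fun a => s(a.1, a.2)

/-- `Tq` is the entering tree (with root `q`, vertex set `S`, subgraph of the barrier
digraph of `P`) corresponding to the undirected tree `T`: it is obtained from `T` by
directing all edges toward `q` and replacing the weight of each arc `(i,j)` by
`v i j = p i j - p i i`. -/
def Corresponds (P : PotGraph α) (Tq : Finset (α × α)) (T : Finset (Sym2 α))
    (S : Finset α) (q : α) : Prop :=
  IsTreeOn (barcs P) Tq S q ∧ undir Tq = T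

section Helpers

set_option linter.unusedSectionVars false

lemma mem_rootSet {A : Finset (α × α)} {i : α} : i ∈ rootSet A ↔ ∀ j, (i, j) ∉ A := by
  simp [rootSet]

lemma mem_treeVerts {F : Finset (α × α)} {i q : α} :
    i ∈ treeVerts F q ↔ Relation.ReflTransGen (arcRel F) i q := by
  simp [treeVerts]

lemma root_mem_treeVerts {A : Finset (α × α)} {q : α} : q ∈ treeVerts A q :=
  mem_treeVerts.mpr .refl

lemma sink_unique {A : Finset (α × α)}
    (hfun : ∀ i j j', (i, j) ∈ A → (i, j') ∈ A → j = j') {z : α}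
    (hzs : ∀ j, (z, j) ∉ A) :
    ∀ {i w : α}, Relation.ReflTransGen (arcRel A) i z →
      Relation.ReflTransGen (arcRel A) i w → (∀ j, (w, j) ∉ A) → z = w := by
  intro i w hz
  induction hz using Relation.ReflTransGen.head_induction_on with
  | refl =>
    intro hw hws
    rcases hw.cases_head with h | ⟨c, hc, _⟩
    · exact h
    · exact absurd hc (hzs _)
  | head h' hpath ih =>
    intro hw hws
    rcases hw.cases_head with h | ⟨c', hc', hcw⟩
    · exact absurd h' (h ▸ hws _)
    · exact ih ((hfun _ _ _ hc' h') ▸ hcw) hws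

lemma acyclic_of_sinks {A : Finset (α × α)}
    (hfun : ∀ i j j', (i, j) ∈ A → (i, j') ∈ A → j = j')
    (hs : ∀ i, ∃ z, Relation.ReflTransGen (arcRel A) i z ∧ ∀ j, (z, j) ∉ A) :
    ∀ i, ¬ Relation.TransGen (arcRel A) i i := by
  intro i
  obtain ⟨z, hpath, hzs⟩ := hs i
  induction hpath using Relation.ReflTransGen.head_induction_on with
  | refl =>
    intro hcyc
    obtain ⟨c, hc, -⟩ := (Relation.TransGen.head'_iff).mp hcyc
    exact hzs _ hc
  | head h' hpath ih =>
    intro hcyc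
    obtain ⟨c', hc', hrest⟩ := (Relation.TransGen.head'_iff).mp hcyc
    have : c' = _ := hfun _ _ _ hc' h'
    exact ih (Relation.TransGen.tail' (this ▸ hrest) h')

lemma exists_sink {A : Finset (α × α)} (hA : IsEForest A) (i : α) :
    ∃ z, Relation.ReflTransGen (arcRel A) i z ∧ ∀ j, (z, j) ∉ A := by
  have hwf : WellFounded (fun a b : α => arcRel A b a) := by
    haveI : IsTrans α (fun a b : α => Relation.TransGen (arcRel A) b a) :=
      ⟨fun a b c h1 h2 => h2.trans h1⟩
    haveI : IsIrrefl α (fun a b : α => Relation.TransGen (arcRel A) b a) :=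
      ⟨fun a h => hA.2 a h⟩
    exact Subrelation.wf (fun h => Relation.TransGen.single h)
      (Finite.wellFounded_of_trans_of_irrefl _)
  induction i using hwf.induction with
  | _ i ih =>
    by_cases h : ∀ j, (i, j) ∉ A
    · exact ⟨i, .refl, h⟩
    · push_neg at h
      obtain ⟨j, hj⟩ := h
      obtain ⟨z, hz, hzs⟩ := ih j hj
      exact ⟨z, .head hj hz, hzs⟩

lemma head_mem_treeVerts {A : Finset (α × α)} (hA : IsEForest A) {q : α}
    (hq : q ∈ rootSet A) {i j : α} (hij : (i, j) ∈ A) (hi : i ∈ treeVerts A q) :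
    j ∈ treeVerts A q := by
  rw [mem_treeVerts] at hi ⊢
  rcases hi.cases_head with rfl | ⟨c, hc, hcq⟩
  · exact absurd hij (mem_rootSet.mp hq _)
  · exact (hA.1 _ _ _ hc hij) ▸ hcq

lemma treeVerts_disjoint {A : Finset (α × α)} (hA : IsEForest A) {q q' i : α}
    (hq : q ∈ rootSet A) (hq' : q' ∈ rootSet A)
    (h : i ∈ treeVerts A q) (h' : i ∈ treeVerts A q') : q = q' :=
  sink_unique hA.1 (mem_rootSet.mp hq) (mem_treeVerts.mp h) (mem_treeVerts.mp h')
    (mem_rootSet.mp hq')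

lemma treeArcs_isTreeOn {E A : Finset (α × α)} (hAE : A ⊆ E) (hA : IsEForest A)
    {q : α} (hq : q ∈ rootSet A) : IsTreeOn E (treeArcs A q) (treeVerts A q) q := by
  have hsub : treeArcs A q ⊆ A := Finset.filter_subset _ _
  refine ⟨root_mem_treeVerts, hsub.trans hAE, ?_, ?_, ?_, ?_⟩
  · intro a ha
    rw [treeArcs, Finset.mem_filter] at ha
    exact ⟨ha.2, head_mem_treeVerts hA hq ha.1 ha.2⟩
  · intro i hi hne
    rcases (mem_treeVerts.mp hi).cases_head with h | ⟨c, hc, -⟩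
    · exact absurd h hne
    · refine ⟨c, Finset.mem_filter.mpr ⟨hc, hi⟩, ?_⟩
      intro j hj
      exact hA.1 _ _ _ (hsub hj) hc
  · intro j hj
    exact mem_rootSet.mp hq j (hsub hj)
  · intro i hi
    rw [mem_treeVerts] at hi
    induction hi using Relation.ReflTransGen.head_induction_on with
    | refl => exact .refl
    | head h' hp ih =>
      exact .head (Finset.mem_filter.mpr ⟨h', mem_treeVerts.mpr (.head h' hp)⟩) ih

lemma IsTreeOn.functional {E T : Finset (α × α)} {S : Finset α} {q : α}
    (hT : IsTreeOn E T S q) : ∀ i j j', (i, j) ∈ T → (i, j') ∈ T → j = j' := by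
  intro i j j' hj hj'
  by_cases hiq : i = q
  · exact absurd hj (hiq ▸ hT.2.2.2.2.1 j)
  · exact (hT.2.2.2.1 i (hT.2.2.1 _ hj).1 hiq).unique hj hj'

lemma minW_eq {β : Type*} {s : Set β} {w : β → ℝ} {b : β} (hb : b ∈ s)
    (hmin : ∀ x ∈ s, w b ≤ w x) : minW s w = (w b : EReal) := by
  apply le_antisymm
  · exact sInf_le ⟨b, hb, rfl⟩
  · refine le_sInf ?_
    rintro _ ⟨x, hx, rfl⟩
    exact EReal.coe_le_coe_iff.mpr (hmin x hx)

lemma aweight_split (v : α → α → ℝ) (A : Finset (α × α)) (S : Finset α) :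
    aweight v A = aweight v (A.filter fun a => a.1 ∉ S) +
      aweight v (A.filter fun a => a.1 ∈ S) := by
  unfold aweight
  rw [← Finset.sum_filter_add_sum_filter_not A (fun a => a.1 ∉ S) (fun a => v a.1 a.2)]
  congr 2
  ext a
  simp

lemma aweight_union (v : α → α → ℝ) {A B : Finset (α × α)} (h : Disjoint A B) :
    aweight v (A ∪ B) = aweight v A + aweight v B := Finset.sum_union h

lemma outside_sink {A B : Finset (α × α)} {S : Finset α} (hA : IsEForest A)
    (hBtail : ∀ b ∈ B, b.1 ∈ S)
    (hclosed : ∀ b ∈ A, b.1 ∉ S → b.2 ∉ S) {i : α} (hi : i ∉ S) :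
    ∃ z, Relation.ReflTransGen (arcRel ((A.filter fun b => b.1 ∉ S) ∪ B)) i z ∧
      ∀ j, (z, j) ∉ (A.filter fun b => b.1 ∉ S) ∪ B := by
  obtain ⟨z, hz, hzs⟩ := exists_sink hA i
  have key : ∀ {m : α}, Relation.ReflTransGen (arcRel A) m z → m ∉ S →
      Relation.ReflTransGen (arcRel ((A.filter fun b => b.1 ∉ S) ∪ B)) m z ∧ z ∉ S := by
    intro m hm
    induction hm using Relation.ReflTransGen.head_induction_on with
    | refl => exact fun h => ⟨.refl, h⟩
    | head h' hp ih =>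
      intro hmS
      have hcS := hclosed _ h' hmS
      obtain ⟨hpath, hzS⟩ := ih hcS
      exact ⟨.head (Finset.mem_union_left _ (Finset.mem_filter.mpr ⟨h', hmS⟩)) hpath, hzS⟩
  obtain ⟨hpath, hzS⟩ := key hz hi
  refine ⟨z, hpath, ?_⟩
  intro j hj
  rcases Finset.mem_union.mp hj with hj | hj
  · exact hzs j (Finset.mem_filter.mp hj).1
  · exact hzS (hBtail _ hj)

lemma swap_forest {E A B : Finset (α × α)} {S : Finset α}
    (hAE : A ⊆ E) (hA : IsEForest A) (hBE : B ⊆ E)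
    (hBtail : ∀ b ∈ B, b.1 ∈ S)
    (hBfun : ∀ i j j', (i, j) ∈ B → (i, j') ∈ B → j = j')
    (hclosed : ∀ b ∈ A, b.1 ∉ S → b.2 ∉ S)
    (hreach : ∀ i ∈ S, ∃ z,
      Relation.ReflTransGen (arcRel ((A.filter fun b => b.1 ∉ S) ∪ B)) i z ∧
      ∀ j, (z, j) ∉ (A.filter fun b => b.1 ∉ S) ∪ B) :
    ((A.filter fun b => b.1 ∉ S) ∪ B) ⊆ E ∧
      IsEForest ((A.filter fun b => b.1 ∉ S) ∪ B) := by
  have hsubE : ((A.filter fun b => b.1 ∉ S) ∪ B) ⊆ E :=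
    Finset.union_subset ((Finset.filter_subset _ _).trans hAE) hBE
  have hfun : ∀ i j j', (i, j) ∈ (A.filter fun b => b.1 ∉ S) ∪ B →
      (i, j') ∈ (A.filter fun b => b.1 ∉ S) ∪ B → j = j' := by
    intro i j j' hj hj'
    rcases Finset.mem_union.mp hj with hj | hj <;>
      rcases Finset.mem_union.mp hj' with hj' | hj'
    · exact hA.1 _ _ _ (Finset.mem_filter.mp hj).1 (Finset.mem_filter.mp hj').1
    · exact absurd (hBtail _ hj') (Finset.mem_filter.mp hj).2
    · exact absurd (hBtail _ hj) (Finset.mem_filter.mp hj').2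
    · exact hBfun _ _ _ hj hj'
  refine ⟨hsubE, hfun, acyclic_of_sinks hfun ?_⟩
  intro i
  by_cases hi : i ∈ S
  · exact hreach i hi
  · exact outside_sink hA hBtail hclosed hi

lemma IsMinForest.le {v : α → α → ℝ} {E : Finset (α × α)} {k : ℕ} {F F' : Finset (α × α)}
    (hF : IsMinForest v E k F) (hF' : F' ∈ FSet E k) : aweight v F ≤ aweight v F' := by
  have h : (aweight v F : EReal) ≤ (aweight v F' : EReal) := by
    rw [hF.2]
    exact sInf_le ⟨F', hF', rfl⟩
  exact EReal.coe_le_coe_iff.mp h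

end Helpers

/-- Proposition 2.  Let `F ∈ 𝓕̃^k`, `y ∈ K_F`,
`G ∈ 𝓕̃^{k-1} ∩ 𝓡^F_y`, and suppose the head of the unique arc of `G` leaving
`V(T^F_y)` lies in `V(T^F_x)` for a root `x ∈ K_F`.  Then
`λ^•_{V(T^G_x)} = λ^•_{V(T^F_x)} + λ^∘_{V(T^F_y)}`. -/
theorem statement5 (v : α → α → ℝ) (E : Finset (α × α)) (hE : ∀ i, (i, i) ∉ E)
    (k : ℕ) (hk : 1 ≤ k) (F : Finset (α × α)) (hF : IsMinForest v E k F)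
    (y : α) (hy : y ∈ rootSet F)
    (G : Finset (α × α)) (hGmin : IsMinForest v E (k - 1) G) (hGd : IsDescendant E F G y)
    (x : α) (hx : x ∈ rootSet F)
    (harc : ∃ a ∈ G, a.1 ∈ treeVerts F y ∧ a.2 ∉ treeVerts F y ∧ a.2 ∈ treeVerts F x) :
    lamBul v E (treeVerts G x) = lamBul v E (treeVerts F x) + lamCirc v E (treeVerts F y) := by
  classical
  have hFE := hF.1.1
  have hFfor := hF.1.2.1
  have hFroots := hF.1.2.2
  have hGE := hGmin.1.1
  have hGfor := hGmin.1.2.1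
  have hGroots := hGmin.1.2.2
  obtain ⟨hyF, hrootsG, hind, a, haSy, hTy⟩ := hGd
  obtain ⟨⟨p, h0⟩, hpG, hpSy, hh0Sy, hh0Sx⟩ := harc
  have hxy : x ≠ y := by rintro rfl; exact hh0Sy hh0Sx
  have hxG : x ∈ rootSet G := by
    rw [hrootsG]; exact Finset.mem_sdiff.mpr ⟨hx, by simpa using hxy⟩
  have hTyG : restrictArcs G (treeVerts F y) ⊆ G := Finset.filter_subset _ _
  have hpa : p = a := by
    by_contra hne
    obtain ⟨j, hj, -⟩ := hTy.2.2.2.1 p hpSy hne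
    have hjSy : j ∈ treeVerts F y := (hTy.2.2.1 _ hj).2
    have hej : h0 = j := hGfor.1 p h0 j hpG (hTyG hj)
    exact hh0Sy (hej ▸ hjSy)
  rw [hpa] at hpG
  -- roots of G avoid the tree of y
  have hrootG_notSy : ∀ r ∈ rootSet G, r ∉ treeVerts F y := by
    intro r hr hrSy
    rw [hrootsG] at hr
    obtain ⟨hrF, hry⟩ := Finset.mem_sdiff.mp hr
    exact (by simpa using hry : r ≠ y)
      (treeVerts_disjoint hFfor hrF hyF root_mem_treeVerts hrSy)
  -- arcs of G from a tree of F other than T^F_y are the arcs of that tree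
  have hGtree : ∀ q, q ∈ rootSet F → q ≠ y → ∀ {i j : α}, i ∈ treeVerts F q →
      (i, j) ∈ G → (i, j) ∈ treeArcs F q := by
    intro q hqF hqy i j hi hij
    have hqG : q ∈ rootSet G := by
      rw [hrootsG]; exact Finset.mem_sdiff.mpr ⟨hqF, by simpa using hqy⟩
    by_cases hiq : i = q
    · exact absurd (hiq ▸ hij) (mem_rootSet.mp hqG j)
    · rcases (mem_treeVerts.mp hi).cases_head with h | ⟨c, hc, -⟩
      · exact absurd h hiq
      · have hiTA : (i, c) ∈ treeArcs F q := Finset.mem_filter.mpr ⟨hc, hi⟩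
        have hiG : (i, c) ∈ G := by
          have h2 : (i, c) ∈ restrictArcs G (treeVerts F q) := by
            rw [hind q hqG]; exact hiTA
          exact (Finset.mem_filter.mp h2).1
        have hjc : j = c := hGfor.1 i j c hij hiG
        exact hjc ▸ hiTA
  have hGout : ∀ b ∈ G, b.1 ∉ treeVerts F y → b.2 ∉ treeVerts F y := by
    rintro ⟨i, j⟩ hij hiSy hjSy
    obtain ⟨z, hz, hzs⟩ := exists_sink hFfor i
    have hzF : z ∈ rootSet F := mem_rootSet.mpr hzs
    have hiz : i ∈ treeVerts F z := mem_treeVerts.mpr hz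
    have hzy : z ≠ y := fun h => hiSy (h ▸ hiz)
    have hTA := hGtree z hzF hzy hiz hij
    have hjz : j ∈ treeVerts F z :=
      head_mem_treeVerts hFfor hzF (Finset.mem_filter.mp hTA).1 hiz
    exact hzy (treeVerts_disjoint hFfor hzF hyF hjz hjSy)
  have hGfilSy : G.filter (fun b => b.1 ∈ treeVerts F y)
      = insert (a, h0) (restrictArcs G (treeVerts F y)) := by
    ext ⟨i, j⟩
    simp only [Finset.mem_filter, Finset.mem_insert, Prod.mk.injEq]
    constructor
    · rintro ⟨hijG, hiSy⟩
      by_cases hia : i = a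
      · exact Or.inl ⟨hia, hGfor.1 i j h0 hijG (hia.symm ▸ hpG)⟩
      · obtain ⟨c, hc, -⟩ := hTy.2.2.2.1 i hiSy hia
        have hcj : c = j := hGfor.1 i c j (hTyG hc) hijG
        exact Or.inr (hcj ▸ hc)
    · rintro (⟨rfl, rfl⟩ | h)
      · exact ⟨hpG, haSy⟩
      · exact ⟨hTyG h, (Finset.mem_filter.mp h).2.1⟩
  have hGfilSx : G.filter (fun b => b.1 ∈ treeVerts F x) = treeArcs F x := by
    ext ⟨i, j⟩
    constructor
    · intro hm
      obtain ⟨hijG, hiSx⟩ := Finset.mem_filter.mp hm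
      exact hGtree x hx hxy hiSx hijG
    · intro hmem
      have h2 : (i, j) ∈ restrictArcs G (treeVerts F x) := by
        rw [hind x hxG]; exact hmem
      obtain ⟨h1, h3, -⟩ := Finset.mem_filter.mp h2
      exact Finset.mem_filter.mpr ⟨h1, h3⟩
  have hTFxG : treeArcs F x ⊆ G := by
    intro b hb
    rw [← hGfilSx] at hb
    exact (Finset.mem_filter.mp hb).1
  -- the vertex set of T^G_x
  have hSeq : treeVerts G x = treeVerts F x ∪ treeVerts F y := by
    ext i
    rw [Finset.mem_union]
    constructor
    · intro hi
      by_contra hcon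
      push_neg at hcon
      obtain ⟨hiSx, hiSy⟩ := hcon
      obtain ⟨z, hz, hzs⟩ := exists_sink hFfor i
      have hzF : z ∈ rootSet F := mem_rootSet.mpr hzs
      have hiz : i ∈ treeVerts F z := mem_treeVerts.mpr hz
      have hzy : z ≠ y := fun h => hiSy (h ▸ hiz)
      have hzx : z ≠ x := fun h => hiSx (h ▸ hiz)
      have key : ∀ {m n : α}, Relation.ReflTransGen (arcRel G) m n →
          m ∈ treeVerts F z → n ∈ treeVerts F z := by
        intro m n hmn
        induction hmn with
        | refl => exact id
        | tail hp harc2 ih =>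
          intro hm
          have hb := ih hm
          have hTA := hGtree z hzF hzy hb harc2
          exact head_mem_treeVerts hFfor hzF (Finset.mem_filter.mp hTA).1 hb
      have hxz : x ∈ treeVerts F z := key (mem_treeVerts.mp hi) hiz
      exact hzx (treeVerts_disjoint hFfor hzF hx hxz root_mem_treeVerts)
    · rintro (hi | hi)
      · have h1 := (treeArcs_isTreeOn hFE hFfor hx).2.2.2.2.2 i hi
        exact mem_treeVerts.mpr
          (Relation.ReflTransGen.mono (r := arcRel (treeArcs F x)) (p := arcRel G) (fun a b hab => hTFxG hab) _ _ h1)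
      · have h1 := hTy.2.2.2.2.2 i hi
        have h2 : Relation.ReflTransGen (arcRel G) i a :=
          Relation.ReflTransGen.mono (r := arcRel (restrictArcs G (treeVerts F y))) (p := arcRel G) (fun a b hab => hTyG hab) _ _ h1
        have h3 : Relation.ReflTransGen (arcRel G) h0 x := by
          have h4 := (treeArcs_isTreeOn hFE hFfor hx).2.2.2.2.2 h0 hh0Sx
          exact Relation.ReflTransGen.mono (r := arcRel (treeArcs F x)) (p := arcRel G) (fun a b hab => hTFxG hab) _ _ h4
        exact mem_treeVerts.mpr (h2.trans (.head hpG h3))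
  -- decomposition of the arcs of T^G_x
  have hTGxeq : treeArcs G x
      = treeArcs F x ∪ insert (a, h0) (restrictArcs G (treeVerts F y)) := by
    rw [← hGfilSx, ← hGfilSy]
    ext b
    simp only [Finset.mem_union, Finset.mem_filter, treeArcs, hSeq]
    tauto
  have hCtail : ∀ b ∈ insert (a, h0) (restrictArcs G (treeVerts F y)),
      b.1 ∈ treeVerts F y := by
    intro b hb
    rcases Finset.mem_insert.mp hb with rfl | hb
    · exact haSy
    · exact (Finset.mem_filter.mp hb).2.1
  have hSxSy : ∀ i, i ∈ treeVerts F x → i ∉ treeVerts F y := fun i h1 h2 =>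
    hxy (treeVerts_disjoint hFfor hx hyF h1 h2)
  have hdisjFC : Disjoint (treeArcs F x)
      (insert (a, h0) (restrictArcs G (treeVerts F y))) :=
    Finset.disjoint_left.mpr fun b hb hbC =>
      hSxSy b.1 (Finset.mem_filter.mp hb).2 (hCtail b hbC)
  have hweq : aweight v (treeArcs G x) = aweight v (treeArcs F x)
      + aweight v (insert (a, h0) (restrictArcs G (treeVerts F y))) := by
    rw [hTGxeq]; exact aweight_union v hdisjFC
  -- roots inside a tree
  have hroot_eq : ∀ (A : Finset (α × α)) (r x' : α), r ∈ rootSet A →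
      r ∈ treeVerts A x' → r = x' := by
    intro A r x' hr hrS
    rcases (mem_treeVerts.mp hrS).cases_head with h | ⟨c, hc, -⟩
    · exact h
    · exact absurd hc (mem_rootSet.mp hr c)
  -- generic swap of one tree by another tree on the same vertex set
  have htreeswap : ∀ (A : Finset (α × α)) (m : ℕ) (x' : α), A ⊆ E → IsEForest A →
      (rootSet A).card = m → x' ∈ rootSet A →
      ∀ T q, q ∈ treeVerts A x' → IsTreeOn E T (treeVerts A x') q →
        ((A.filter fun b => b.1 ∉ treeVerts A x') ∪ T) ∈ FSet E m := by
    intro A m x' hAE hAfor hAcard hx'A T q hqS hT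
    have hclosed : ∀ b ∈ A, b.1 ∉ treeVerts A x' → b.2 ∉ treeVerts A x' := by
      rintro ⟨i, j⟩ hij hiS hjS
      exact hiS (mem_treeVerts.mpr (.head hij (mem_treeVerts.mp hjS)))
    have hTtail : ∀ b ∈ T, b.1 ∈ treeVerts A x' := fun b hb => (hT.2.2.1 b hb).1
    have hreach : ∀ i ∈ treeVerts A x', ∃ z,
        Relation.ReflTransGen
          (arcRel ((A.filter fun b => b.1 ∉ treeVerts A x') ∪ T)) i z ∧
        ∀ j, (z, j) ∉ (A.filter fun b => b.1 ∉ treeVerts A x') ∪ T := by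
      intro i hi
      refine ⟨q, Relation.ReflTransGen.mono (r := arcRel T)
        (fun a b hab => Finset.mem_union_right _ hab) _ _ (hT.2.2.2.2.2 i hi), ?_⟩
      intro j hj
      rcases Finset.mem_union.mp hj with hj | hj
      · exact (Finset.mem_filter.mp hj).2 hqS
      · exact hT.2.2.2.2.1 j hj
    obtain ⟨hHE, hHfor⟩ :=
      swap_forest hAE hAfor hT.2.1 hTtail hT.functional hclosed hreach
    refine ⟨hHE, hHfor, ?_⟩
    have hroots : rootSet ((A.filter fun b => b.1 ∉ treeVerts A x') ∪ T)
        = insert q ((rootSet A).erase x') := by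
      ext i
      simp only [mem_rootSet, Finset.mem_insert, Finset.mem_erase]
      by_cases hiS : i ∈ treeVerts A x'
      · constructor
        · intro hall
          left
          by_contra hiq
          obtain ⟨j, hj, -⟩ := hT.2.2.2.1 i hiS hiq
          exact hall j (Finset.mem_union_right _ hj)
        · rintro (rfl | ⟨hix, hirt⟩)
          · intro j hj
            rcases Finset.mem_union.mp hj with hj | hj
            · exact (Finset.mem_filter.mp hj).2 hqS
            · exact hT.2.2.2.2.1 j hj
          · exact absurd (hroot_eq A i x' (mem_rootSet.mpr hirt) hiS) hix
      · constructor
        · intro hall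
          right
          refine ⟨fun h => hiS (by rw [h]; exact root_mem_treeVerts), ?_⟩
          intro j hj
          exact hall j (Finset.mem_union_left _ (Finset.mem_filter.mpr ⟨hj, hiS⟩))
        · rintro (rfl | ⟨hix, hirt⟩)
          · exact absurd hqS hiS
          · intro j hj
            rcases Finset.mem_union.mp hj with hj | hj
            · exact hirt j (Finset.mem_filter.mp hj).1
            · exact hiS (hTtail _ hj)
    rw [hroots, Finset.card_insert_of_notMem, Finset.card_erase_of_mem hx'A, hAcard]
    · have h1 : 1 ≤ m := hAcard ▸ Finset.card_pos.mpr ⟨x', hx'A⟩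
      omega
    · intro hq
      obtain ⟨hqx, hqrt⟩ := Finset.mem_erase.mp hq
      exact hqx (hroot_eq A q x' hqrt hqS)
  -- minimality of T^F_x among trees on treeVerts F x
  have hstep1 : ∀ T q, q ∈ treeVerts F x → IsTreeOn E T (treeVerts F x) q →
      aweight v (treeArcs F x) ≤ aweight v T := by
    intro T q hqS hT
    have hmem := htreeswap F k x hFE hFfor hFroots hx T q hqS hT
    have hle := hF.le hmem
    have hsplit := aweight_split v F (treeVerts F x)
    have hTA : F.filter (fun b => b.1 ∈ treeVerts F x) = treeArcs F x := rfl
    rw [hTA] at hsplit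
    have hsplit2 : aweight v ((F.filter fun b => b.1 ∉ treeVerts F x) ∪ T)
        = aweight v (F.filter fun b => b.1 ∉ treeVerts F x) + aweight v T := by
      apply aweight_union
      exact Finset.disjoint_left.mpr fun b hb hbT =>
        (Finset.mem_filter.mp hb).2 ((hT.2.2.1 b hbT).1)
    rw [hsplit2] at hle
    linarith
  -- minimality of T^G_x among trees on treeVerts G x
  have hstep3 : ∀ T q, q ∈ treeVerts G x → IsTreeOn E T (treeVerts G x) q →
      aweight v (treeArcs G x) ≤ aweight v T := by
    intro T q hqS hT
    have hmem := htreeswap G (k - 1) x hGE hGfor hGroots hxG T q hqS hT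
    have hle := hGmin.le hmem
    have hsplit := aweight_split v G (treeVerts G x)
    have hTA : G.filter (fun b => b.1 ∈ treeVerts G x) = treeArcs G x := rfl
    rw [hTA] at hsplit
    have hsplit2 : aweight v ((G.filter fun b => b.1 ∉ treeVerts G x) ∪ T)
        = aweight v (G.filter fun b => b.1 ∉ treeVerts G x) + aweight v T := by
      apply aweight_union
      exact Finset.disjoint_left.mpr fun b hb hbT =>
        (Finset.mem_filter.mp hb).2 ((hT.2.2.1 b hbT).1)
    rw [hsplit2] at hle
    linarith
  -- minimality of the cotree of T^F_y
  have hstepC : ∀ T q, q ∈ treeVerts F y → IsCTreeOn E T (treeVerts F y) q →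
      aweight v (insert (a, h0) (restrictArcs G (treeVerts F y))) ≤ aweight v T := by
    intro T q hqSy hCT
    obtain ⟨r, hrSy, T', hT', hqrE, rfl⟩ := hCT
    have hBtail : ∀ b ∈ insert (q, r) T', b.1 ∈ treeVerts F y := by
      intro b hb
      rcases Finset.mem_insert.mp hb with rfl | hb
      · exact hqSy
      · exact (hT'.2.2.1 b hb).1
    have hBfun : ∀ i j j', (i, j) ∈ insert (q, r) T' →
        (i, j') ∈ insert (q, r) T' → j = j' := by
      intro i j j' hj hj'
      rcases Finset.mem_insert.mp hj with h1 | h1 <;>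
        rcases Finset.mem_insert.mp hj' with h2 | h2
      · injection h1 with e1a e1b
        injection h2 with e2a e2b
        exact e1b.trans e2b.symm
      · injection h1 with e1a e1b
        exact absurd (e1a ▸ h2) (hT'.2.2.2.2.1 j')
      · injection h2 with e2a e2b
        exact absurd (e2a ▸ h1) (hT'.2.2.2.2.1 j)
      · exact hT'.functional i j j' h1 h2
    have hBE : insert (q, r) T' ⊆ E := Finset.insert_subset hqrE hT'.2.1
    have hreach : ∀ i ∈ treeVerts F y, ∃ z,
        Relation.ReflTransGen
          (arcRel ((G.filter fun b => b.1 ∉ treeVerts F y) ∪ insert (q, r) T')) i z ∧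
        ∀ j, (z, j) ∉ (G.filter fun b => b.1 ∉ treeVerts F y) ∪ insert (q, r) T' := by
      intro i hi
      obtain ⟨z, hz, hzs⟩ := outside_sink hGfor hBtail hGout hrSy
      refine ⟨z, ?_, hzs⟩
      have hiq : Relation.ReflTransGen
          (arcRel ((G.filter fun b => b.1 ∉ treeVerts F y) ∪ insert (q, r) T')) i q :=
        Relation.ReflTransGen.mono (r := arcRel T')
          (fun a b hab => Finset.mem_union_right _ (Finset.mem_insert_of_mem hab))
          _ _ (hT'.2.2.2.2.2 i hi)
      exact hiq.trans
        (.head (Finset.mem_union_right _ (Finset.mem_insert_self _ _)) hz)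
    obtain ⟨hHE, hHfor⟩ := swap_forest hGE hGfor hBE hBtail hBfun hGout hreach
    have hroots : rootSet ((G.filter fun b => b.1 ∉ treeVerts F y) ∪ insert (q, r) T')
        = rootSet G := by
      ext i
      simp only [mem_rootSet]
      by_cases hiSy : i ∈ treeVerts F y
      · constructor
        · intro hall
          exfalso
          by_cases hiq : i = q
          · exact hall r (Finset.mem_union_right _
              (by rw [hiq]; exact Finset.mem_insert_self _ _))
          · obtain ⟨j, hj, -⟩ := hT'.2.2.2.1 i hiSy hiq
            exact hall j (Finset.mem_union_right _ (Finset.mem_insert_of_mem hj))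
        · intro hall
          exact absurd hiSy (hrootG_notSy i (mem_rootSet.mpr hall))
      · constructor
        · intro hall j hj
          exact hall j (Finset.mem_union_left _ (Finset.mem_filter.mpr ⟨hj, hiSy⟩))
        · intro hall j hj
          rcases Finset.mem_union.mp hj with hj | hj
          · exact hall j (Finset.mem_filter.mp hj).1
          · exact hiSy (hBtail _ hj)
    have hmem : ((G.filter fun b => b.1 ∉ treeVerts F y) ∪ insert (q, r) T')
        ∈ FSet E (k - 1) := ⟨hHE, hHfor, by rw [hroots, hGroots]⟩
    have hle := hGmin.le hmem
    have hsplit := aweight_split v G (treeVerts F y)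
    rw [hGfilSy] at hsplit
    have hsplit2 : aweight v ((G.filter fun b => b.1 ∉ treeVerts F y) ∪ insert (q, r) T')
        = aweight v (G.filter fun b => b.1 ∉ treeVerts F y)
          + aweight v (insert (q, r) T') := by
      apply aweight_union
      exact Finset.disjoint_left.mpr fun b hb hbT =>
        (Finset.mem_filter.mp hb).2 (hBtail b hbT)
    rw [hsplit2] at hle
    linarith
  -- the three minima are attained
  have hTGxTree : IsTreeOn E (treeArcs G x) (treeVerts G x) x :=
    treeArcs_isTreeOn hGE hGfor hxG
  have hTFxTree : IsTreeOn E (treeArcs F x) (treeVerts F x) x :=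
    treeArcs_isTreeOn hFE hFfor hx
  have hCtree : IsCTreeOn E (insert (a, h0) (restrictArcs G (treeVerts F y)))
      (treeVerts F y) a :=
    ⟨h0, hh0Sy, restrictArcs G (treeVerts F y), hTy, hGE hpG, rfl⟩
  have h1 : lamBul v E (treeVerts G x) = (aweight v (treeArcs G x) : EReal) := by
    unfold lamBul
    refine minW_eq ?_ ?_
    · exact ⟨x, root_mem_treeVerts, hTGxTree⟩
    rintro T ⟨q, hq, hT⟩
    exact hstep3 T q hq hT
  have h2 : lamBul v E (treeVerts F x) = (aweight v (treeArcs F x) : EReal) := by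
    unfold lamBul
    refine minW_eq ?_ ?_
    · exact ⟨x, root_mem_treeVerts, hTFxTree⟩
    rintro T ⟨q, hq, hT⟩
    exact hstep1 T q hq hT
  have h3 : lamCirc v E (treeVerts F y)
      = (aweight v (insert (a, h0) (restrictArcs G (treeVerts F y))) : EReal) := by
    unfold lamCirc
    refine minW_eq ?_ ?_
    · exact ⟨a, haSy, hCtree⟩
    rintro T ⟨q, hq, hT⟩
    exact hstepC T q hq hT
  rw [h1, h2, h3, hweq]
  exact_mod_cast rfl

end BarrierForests
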